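/- Let i ≥ 1 and j ≥ 0 be integers and let A be a symmetric n×n matrix with entries in {0,1} (the adjacency matrix of a graph on n vertices with at most one self-loop per vertex), with i + j + 1 ≤ n. Then λ_{i+1}(A) − λ_{n−j}(A) ≤ (n/2)·√((i+j+1)/(i(j+1))), where λ_1 ≥ λ_2 ≥ ⋯ ≥ λ_n are the eigenvalues of A in nonincreasing order. -/

import Mathlib

open Finset Matrix Module

section helpers

variable {n : ℕ}

lemma count_transfer (e f : Fin n → ℝ) (h : univ.val.map e = univ.val.map f)
    (p : ℝ → Prop) [DecidablePred p] :
    (univ.filter fun k => p (e k)).card = (univ.filter fun k => p (f k)).card := by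
  have h1 : ∀ g : Fin n → ℝ, (univ.filter fun k => p (g k)).card
      = (univ.val.map g).countP p := by
    intro g
    rw [Multiset.countP_map]
    simp [Finset.filter, Finset.card, Multiset.countP_eq_card_filter, Function.comp]
  rw [h1, h1, h]

lemma count_le_sorted (μ : Fin n → ℝ) (hmono : Antitone μ) (m : Fin n) :
    m.val + 1 ≤ (univ.filter fun k => μ m ≤ μ k).card := by
  have hs : Finset.Iic m ⊆ univ.filter fun k => μ m ≤ μ k := by
    intro k hk
    simp only [Finset.mem_Iic] at hk
    simp [hmono hk]
  calc m.val + 1 = (Finset.Iic m).card := (Fin.card_Iic m).symm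
    _ ≤ _ := Finset.card_le_card hs

lemma count_ge_sorted (μ : Fin n → ℝ) (hmono : Antitone μ) (m : Fin n) :
    n - m.val ≤ (univ.filter fun k => μ k ≤ μ m).card := by
  have hs : Finset.Ici m ⊆ univ.filter fun k => μ k ≤ μ m := by
    intro k hk
    simp only [Finset.mem_Ici] at hk
    simp [hmono hk]
  calc n - m.val = (Finset.Ici m).card := (Fin.card_Ici m).symm
    _ ≤ _ := Finset.card_le_card hs

lemma exists_sorted (e : Fin n → ℝ) :
    ∃ ν : Fin n → ℝ, Antitone ν ∧ univ.val.map ν = univ.val.map e := by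
  classical
  refine ⟨(e ∘ Tuple.sort e) ∘ Fin.rev, ?_, ?_⟩
  · intro a b hab
    exact Tuple.monotone_sort e (by simpa [Fin.rev_le_rev] using hab)
  · have : (e ∘ Tuple.sort e) ∘ Fin.rev = e ∘ ⇑(Fin.revPerm.trans (Tuple.sort e)) := rfl
    rw [this]
    have h2 : univ.val.map ⇑(Fin.revPerm.trans (Tuple.sort e)) = univ.val := by
      have := congrArg Finset.val (Finset.map_univ_equiv (Fin.revPerm.trans (Tuple.sort e)))
      simpa [Finset.map] using this
    calc univ.val.map (e ∘ ⇑(Fin.revPerm.trans (Tuple.sort e)))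
        = (univ.val.map ⇑(Fin.revPerm.trans (Tuple.sort e))).map e := by
          rw [Multiset.map_map]
      _ = univ.val.map e := by rw [h2]

lemma sum_sq_transfer (e ν : Fin n → ℝ) (h : univ.val.map ν = univ.val.map e) :
    ∑ k, ν k ^ 2 = ∑ k, e k ^ 2 := by
  have h1 : ∀ g : Fin n → ℝ, ∑ k, g k ^ 2 = ((univ.val.map g).map (fun t : ℝ => t ^ 2)).sum := by
    intro g
    rw [Multiset.map_map]
    rfl
  rw [h1, h1, h]

lemma dot_eq_inner (x y : EuclideanSpace ℝ (Fin n)) :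
    (inner ℝ x y : ℝ) = (fun i => x i) ⬝ᵥ (fun i => y i) := by
  simp [PiLp.inner_apply, dotProduct, RCLike.inner_apply, mul_comm]

lemma exists_coeffs (B : Matrix (Fin n) (Fin n) ℝ) (hB : B.IsHermitian)
    (S : Finset (Fin n)) (v : EuclideanSpace ℝ (Fin n))
    (hv : v ∈ Submodule.span ℝ (Set.range fun k : S =>
      (hB.eigenvectorBasis k : EuclideanSpace ℝ (Fin n)))) :
    ∃ c : Fin n → ℝ, (∀ k ∉ S, c k = 0) ∧
      ((fun i => v i) ⬝ᵥ (B *ᵥ fun i => v i) = ∑ k, hB.eigenvalues k * c k ^ 2) ∧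
      ((fun i => v i) ⬝ᵥ (fun i => v i) = ∑ k, c k ^ 2) := by
  classical
  have hortho := hB.eigenvectorBasis.orthonormal
  refine ⟨fun k => inner ℝ (hB.eigenvectorBasis k) v, ?_, ?_, ?_⟩
  · intro k hk
    induction hv using Submodule.span_induction with
    | mem x hx =>
      obtain ⟨l, rfl⟩ := hx
      exact hortho.2 (fun h : k = (l : Fin n) => hk (h ▸ l.2))
    | zero => exact inner_zero_right _
    | add x y _ _ hx hy =>
      show (inner ℝ (hB.eigenvectorBasis k) (x + y) : ℝ) = 0
      rw [inner_add_right]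
      beta_reduce at hx hy
      rw [hx, hy, add_zero]
    | smul a x _ hx =>
      show (inner ℝ (hB.eigenvectorBasis k) (a • x) : ℝ) = 0
      rw [real_inner_smul_right]
      beta_reduce at hx
      rw [hx, mul_zero]
  · set c : Fin n → ℝ := fun k => inner ℝ (hB.eigenvectorBasis k) v with hc
    have hrepr : ∑ k, c k • hB.eigenvectorBasis k = v := hB.eigenvectorBasis.sum_repr' v
    have hT : Matrix.toEuclideanLin B v = ∑ k, (c k * hB.eigenvalues k) • hB.eigenvectorBasis k := by
      conv_lhs => rw [← hrepr]
      rw [map_sum]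
      refine Finset.sum_congr rfl fun k _ => ?_
      rw [_root_.map_smul]
      have : Matrix.toEuclideanLin B (hB.eigenvectorBasis k)
          = hB.eigenvalues k • hB.eigenvectorBasis k := by
        apply (WithLp.equiv 2 (Fin n → ℝ)).injective
        simpa [Matrix.ofLp_toEuclideanLin_apply] using hB.mulVec_eigenvectorBasis k
      rw [this, smul_smul]
    have hdot : (fun i => v i) ⬝ᵥ (B *ᵥ fun i => v i)
        = (inner ℝ v (Matrix.toEuclideanLin B v) : ℝ) := by
      rw [dot_eq_inner]
      rfl
    rw [hdot, hT]
    conv_lhs => rw [← hrepr]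
    rw [hortho.inner_sum]
    simp [mul_comm, mul_left_comm, pow_two]
  · set c : Fin n → ℝ := fun k => inner ℝ (hB.eigenvectorBasis k) v with hc
    have hrepr : ∑ k, c k • hB.eigenvectorBasis k = v := hB.eigenvectorBasis.sum_repr' v
    have hdot : (fun i => v i) ⬝ᵥ (fun i => v i) = (inner ℝ v v : ℝ) := (dot_eq_inner v v).symm
    rw [hdot]
    conv_lhs => rw [← hrepr]
    rw [hortho.inner_sum]
    simp [pow_two]

lemma finrank_span_eigen (B : Matrix (Fin n) (Fin n) ℝ) (hB : B.IsHermitian)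
    (S : Finset (Fin n)) :
    finrank ℝ (Submodule.span ℝ (Set.range fun k : S =>
      (hB.eigenvectorBasis k : EuclideanSpace ℝ (Fin n)))) = S.card := by
  have hli : LinearIndependent ℝ
      (fun k : S => (hB.eigenvectorBasis k : EuclideanSpace ℝ (Fin n))) :=
    (hB.eigenvectorBasis.orthonormal.linearIndependent).comp _ Subtype.val_injective
  rw [finrank_span_eq_card hli, Fintype.card_coe]

lemma exists_ne_zero_inf (V W : Submodule ℝ (EuclideanSpace ℝ (Fin n)))
    (h : n < finrank ℝ V + finrank ℝ W) :
    ∃ v : EuclideanSpace ℝ (Fin n), v ≠ 0 ∧ v ∈ V ⊓ W := by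
  have h1 := Submodule.finrank_sup_add_finrank_inf_eq V W
  have h2 : finrank ℝ ↥(V ⊔ W) ≤ n := by
    simpa [finrank_euclideanSpace_fin] using Submodule.finrank_le (V ⊔ W)
  have h3 : 0 < finrank ℝ ↥(V ⊓ W) := by omega
  have h4 : V ⊓ W ≠ ⊥ := by
    intro hbot
    rw [hbot] at h3
    simp at h3
  obtain ⟨v, hv, hv0⟩ := Submodule.ne_bot_iff _ |>.mp h4
  exact ⟨v, hv0, hv⟩

lemma finrank_inf_ge (V W : Submodule ℝ (EuclideanSpace ℝ (Fin n))) :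
    finrank ℝ V + finrank ℝ W ≤ n + finrank ℝ ↥(V ⊓ W) := by
  have h1 := Submodule.finrank_sup_add_finrank_inf_eq V W
  have h2 : finrank ℝ ↥(V ⊔ W) ≤ n := by
    simpa [finrank_euclideanSpace_fin] using Submodule.finrank_le (V ⊔ W)
  omega

lemma sum_eig_sq (B : Matrix (Fin n) (Fin n) ℝ) (hB : B.IsHermitian) :
    ∑ k, hB.eigenvalues k ^ 2 = Matrix.trace (B * B) := by
  set U : Matrix (Fin n) (Fin n) ℝ := (hB.eigenvectorUnitary : Matrix (Fin n) (Fin n) ℝ) with hU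
  set D : Matrix (Fin n) (Fin n) ℝ := Matrix.diagonal (RCLike.ofReal ∘ hB.eigenvalues) with hD
  have hsp : B = U * D * star U := hB.spectral_theorem
  have hUU : star U * U = 1 := hB.eigenvectorUnitary.2.1
  have : B * B = U * (D * D) * star U := by
    rw [hsp]
    calc U * D * star U * (U * D * star U) = U * D * (star U * U) * D * star U := by
          noncomm_ring
      _ = U * (D * D) * star U := by rw [hUU]; noncomm_ring
  rw [this, Matrix.trace_mul_comm, ← Matrix.mul_assoc, hUU, Matrix.one_mul]
  rw [hD, Matrix.diagonal_mul_diagonal, Matrix.trace_diagonal]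
  simp [pow_two]

lemma trace_sq_M (A : Matrix (Fin n) (Fin n) ℝ) (hA : A.IsHermitian)
    (hA01 : ∀ a b, A a b = 0 ∨ A a b = 1) :
    Matrix.trace ((A - Matrix.of fun _ _ => (1/2 : ℝ)) * (A - Matrix.of fun _ _ => (1/2 : ℝ)))
      = (n : ℝ) ^ 2 / 4 := by
  set M : Matrix (Fin n) (Fin n) ℝ := A - Matrix.of fun _ _ => (1/2 : ℝ) with hM
  have hsym : ∀ a b, M b a = M a b := by
    intro a b
    have := congrFun (congrFun hA a) b
    simp only [Matrix.conjTranspose_apply, star_trivial] at this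
    simp [hM, Matrix.sub_apply, this]
  have hent : ∀ a b, M a b * M b a = 1/4 := by
    intro a b
    rw [hsym a b]
    rcases hA01 a b with h | h <;> simp [hM, Matrix.sub_apply, h] <;> norm_num
  unfold Matrix.trace
  simp only [Matrix.diag_apply, Matrix.mul_apply, hent]
  simp [Finset.sum_const, Finset.card_univ]
  ring

end helpers

set_option maxHeartbeats 1000000 in
/-- For integers `i ≥ 1`, `j ≥ 0` with `i + j + 1 ≤ n`, and a symmetric `n × n`
`(0,1)`-matrix `A` with eigenvalues `μ` listed in nonincreasing order,
`λ_{i+1}(A) - λ_{n-j}(A) ≤ (n/2) √((i+j+1)/(i(j+1)))`. -/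
theorem spread_ij_upper_bound (n i j : ℕ) (hi : 1 ≤ i) (hn : i + j + 1 ≤ n)
    (A : Matrix (Fin n) (Fin n) ℝ) (hA : A.IsHermitian)
    (hA01 : ∀ a b, A a b = 0 ∨ A a b = 1)
    (μ : Fin n → ℝ) (hmono : Antitone μ)
    (hperm : Finset.univ.val.map μ = Finset.univ.val.map hA.eigenvalues) :
    μ ⟨i, by omega⟩ - μ ⟨n - j - 1, by omega⟩ ≤
      ((n : ℝ) / 2) * Real.sqrt (((i : ℝ) + j + 1) / ((i : ℝ) * ((j : ℝ) + 1))) := by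
  classical
  have hn0 : 0 < n := by omega
  set C : Matrix (Fin n) (Fin n) ℝ := Matrix.of fun _ _ => (1/2 : ℝ) with hC
  have hCH : C.IsHermitian := by
    ext a b
    simp [hC, Matrix.conjTranspose_apply]
  set M : Matrix (Fin n) (Fin n) ℝ := A - C with hMdef
  have hM : M.IsHermitian := hA.sub hCH
  obtain ⟨ν, hνmono, hνperm⟩ := exists_sorted hM.eigenvalues
  have hii : i < n := by omega
  have hi1 : i - 1 < n := by omega
  have hnj : n - j - 1 < n := by omega
  set mi : Fin n := ⟨i, hii⟩ with hmi
  set mj : Fin n := ⟨n - j - 1, hnj⟩ with hmj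
  set x : ℝ := ν ⟨i - 1, hi1⟩ with hx
  set y : ℝ := ν ⟨n - j - 1, hnj⟩ with hy
  -- the sum functional and its kernel
  set φ : EuclideanSpace ℝ (Fin n) →ₗ[ℝ] ℝ :=
    { toFun := fun v => ∑ a, v a
      map_add' := by intro v w; simp [PiLp.add_apply, Finset.sum_add_distrib]
      map_smul' := by intro r v; simp [PiLp.smul_apply, Finset.mul_sum] } with hφ
  have hker_rank : n - 1 ≤ finrank ℝ (LinearMap.ker φ) := by
    have h1 := LinearMap.finrank_range_add_finrank_ker φ
    rw [finrank_euclideanSpace_fin] at h1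
    have h2 : finrank ℝ (LinearMap.range φ) ≤ 1 := by
      simpa using Submodule.finrank_le (LinearMap.range φ)
    omega
  have hCv0 : ∀ v : EuclideanSpace ℝ (Fin n), v ∈ LinearMap.ker φ →
      C *ᵥ (fun a => v a) = 0 := by
    intro v hv
    have hs : ∑ a, v a = 0 := hv
    funext a
    simp [hC, Matrix.mulVec, dotProduct, ← Finset.mul_sum, hs]
  have hCq : ∀ f : Fin n → ℝ, 0 ≤ f ⬝ᵥ (C *ᵥ f) := by
    intro f
    have : f ⬝ᵥ (C *ᵥ f) = (1/2) * (∑ b, f b) ^ 2 := by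
      simp only [Matrix.mulVec, dotProduct, hC, Matrix.of_apply]
      rw [← Finset.sum_mul]
      rw [← Finset.mul_sum]
      ring
    rw [this]
    positivity
  have hmiv : mi.val = i := rfl
  have hmjv : mj.val = n - j - 1 := rfl
  have hAMC : A = M + C := by rw [hMdef, sub_add_cancel]
  -- Step 1 : μ mi ≤ x
  have step1 : μ mi ≤ x := by
    set S1 : Finset (Fin n) := univ.filter fun k => μ mi ≤ hA.eigenvalues k with hS1
    have hS1card : i + 1 ≤ S1.card := by
      have h1 := count_le_sorted μ hmono mi
      have h2 := count_transfer μ hA.eigenvalues hperm (fun t => μ mi ≤ t)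
      rw [← hS1] at h2
      omega
    set S2 : Finset (Fin n) := univ.filter fun k => hM.eigenvalues k ≤ x with hS2
    have hS2card : n - (i - 1) ≤ S2.card := by
      have h1 := count_ge_sorted ν hνmono ⟨i - 1, hi1⟩
      have hval : ((⟨i - 1, hi1⟩ : Fin n)).val = i - 1 := rfl
      rw [← hx, hval] at h1
      have h2 := count_transfer ν hM.eigenvalues hνperm (fun t => t ≤ x)
      rw [← hS2] at h2
      omega
    set V1 := Submodule.span ℝ (Set.range fun k : S1 =>
      (hA.eigenvectorBasis k : EuclideanSpace ℝ (Fin n))) with hV1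
    set V2 := Submodule.span ℝ (Set.range fun k : S2 =>
      (hM.eigenvectorBasis k : EuclideanSpace ℝ (Fin n))) with hV2
    have hr1 : finrank ℝ V1 = S1.card := finrank_span_eigen A hA S1
    have hr2 : finrank ℝ V2 = S2.card := finrank_span_eigen M hM S2
    have hr12 : 2 ≤ finrank ℝ ↥(V1 ⊓ V2) := by
      have := finrank_inf_ge V1 V2
      have hcards : S1.card ≤ n := by simpa using Finset.card_le_card (Finset.subset_univ S1)
      omega
    obtain ⟨v, hv0, hvmem⟩ := exists_ne_zero_inf (V1 ⊓ V2) (LinearMap.ker φ) (by omega)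
    have hv1 : v ∈ V1 := hvmem.1.1
    have hv2 : v ∈ V2 := hvmem.1.2
    have hvker : v ∈ LinearMap.ker φ := hvmem.2
    obtain ⟨c, hc0, hcq, hcN⟩ := exists_coeffs A hA S1 v hv1
    obtain ⟨d, hd0, hdq, hdN⟩ := exists_coeffs M hM S2 v hv2
    have hNpos : 0 < (fun a => v a) ⬝ᵥ (fun a => v a) := by
      rw [← dot_eq_inner v v, real_inner_self_eq_norm_sq]
      exact pow_pos (norm_pos_iff.mpr hv0) 2
    have hqAM : (fun a => v a) ⬝ᵥ (A *ᵥ fun a => v a)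
        = (fun a => v a) ⬝ᵥ (M *ᵥ fun a => v a) := by
      conv_lhs => rw [hAMC]
      rw [Matrix.add_mulVec, dotProduct_add, hCv0 v hvker, dotProduct_zero,
        add_zero]
    have hlow : μ mi * ((fun a => v a) ⬝ᵥ fun a => v a)
        ≤ (fun a => v a) ⬝ᵥ (A *ᵥ fun a => v a) := by
      rw [hcq, hcN, Finset.mul_sum]
      refine Finset.sum_le_sum fun k _ => ?_
      by_cases hk : k ∈ S1
      · have : μ mi ≤ hA.eigenvalues k := by
          have := Finset.mem_filter.mp (hS1 ▸ hk)
          exact this.2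
        nlinarith [sq_nonneg (c k)]
      · rw [hc0 k hk]; simp
    have hhigh : (fun a => v a) ⬝ᵥ (M *ᵥ fun a => v a)
        ≤ x * ((fun a => v a) ⬝ᵥ fun a => v a) := by
      rw [hdq, hdN, Finset.mul_sum]
      refine Finset.sum_le_sum fun k _ => ?_
      by_cases hk : k ∈ S2
      · have : hM.eigenvalues k ≤ x := by
          have := Finset.mem_filter.mp (hS2 ▸ hk)
          exact this.2
        nlinarith [sq_nonneg (d k)]
      · rw [hd0 k hk]; simp
    have := hlow.trans (hqAM.le.trans hhigh)
    exact le_of_mul_le_mul_right (by linarith) hNpos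
  -- Step 2 : y ≤ μ mj
  have step2 : y ≤ μ mj := by
    set S1 : Finset (Fin n) := univ.filter fun k => hA.eigenvalues k ≤ μ mj with hS1
    have hS1card : j + 1 ≤ S1.card := by
      have h1 := count_ge_sorted μ hmono mj
      have h2 := count_transfer μ hA.eigenvalues hperm (fun t => t ≤ μ mj)
      rw [← hS1] at h2
      omega
    set S2 : Finset (Fin n) := univ.filter fun k => y ≤ hM.eigenvalues k with hS2
    have hS2card : n - j ≤ S2.card := by
      have h1 := count_le_sorted ν hνmono ⟨n - j - 1, hnj⟩
      have hval : ((⟨n - j - 1, hnj⟩ : Fin n)).val = n - j - 1 := rfl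
      rw [← hy, hval] at h1
      have h2 := count_transfer ν hM.eigenvalues hνperm (fun t => y ≤ t)
      rw [← hS2] at h2
      omega
    set V1 := Submodule.span ℝ (Set.range fun k : S1 =>
      (hA.eigenvectorBasis k : EuclideanSpace ℝ (Fin n))) with hV1
    set V2 := Submodule.span ℝ (Set.range fun k : S2 =>
      (hM.eigenvectorBasis k : EuclideanSpace ℝ (Fin n))) with hV2
    have hr1 : finrank ℝ V1 = S1.card := finrank_span_eigen A hA S1
    have hr2 : finrank ℝ V2 = S2.card := finrank_span_eigen M hM S2
    obtain ⟨v, hv0, hvmem⟩ := exists_ne_zero_inf V1 V2 (by omega)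
    have hv1 : v ∈ V1 := hvmem.1
    have hv2 : v ∈ V2 := hvmem.2
    obtain ⟨c, hc0, hcq, hcN⟩ := exists_coeffs A hA S1 v hv1
    obtain ⟨d, hd0, hdq, hdN⟩ := exists_coeffs M hM S2 v hv2
    have hNpos : 0 < (fun a => v a) ⬝ᵥ (fun a => v a) := by
      rw [← dot_eq_inner v v, real_inner_self_eq_norm_sq]
      exact pow_pos (norm_pos_iff.mpr hv0) 2
    have hqAM : (fun a => v a) ⬝ᵥ (M *ᵥ fun a => v a)
        ≤ (fun a => v a) ⬝ᵥ (A *ᵥ fun a => v a) := by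
      conv_rhs => rw [hAMC]
      rw [Matrix.add_mulVec, dotProduct_add]
      have := hCq (fun a => v a)
      linarith
    have hhigh : (fun a => v a) ⬝ᵥ (A *ᵥ fun a => v a)
        ≤ μ mj * ((fun a => v a) ⬝ᵥ fun a => v a) := by
      rw [hcq, hcN, Finset.mul_sum]
      refine Finset.sum_le_sum fun k _ => ?_
      by_cases hk : k ∈ S1
      · have : hA.eigenvalues k ≤ μ mj := by
          have := Finset.mem_filter.mp (hS1 ▸ hk)
          exact this.2
        nlinarith [sq_nonneg (c k)]
      · rw [hc0 k hk]; simp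
    have hlow : y * ((fun a => v a) ⬝ᵥ fun a => v a)
        ≤ (fun a => v a) ⬝ᵥ (M *ᵥ fun a => v a) := by
      rw [hdq, hdN, Finset.mul_sum]
      refine Finset.sum_le_sum fun k _ => ?_
      by_cases hk : k ∈ S2
      · have : y ≤ hM.eigenvalues k := by
          have := Finset.mem_filter.mp (hS2 ▸ hk)
          exact this.2
        nlinarith [sq_nonneg (d k)]
      · rw [hd0 k hk]; simp
    have := hlow.trans (hqAM.trans hhigh)
    exact le_of_mul_le_mul_right (by linarith) hNpos
  -- Step 3 : sum of squares bound
  set x' : ℝ := max x 0 with hx'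
  set y' : ℝ := min y 0 with hy'
  have hx'0 : 0 ≤ x' := le_max_right x 0
  have hy'0 : y' ≤ 0 := min_le_right y 0
  have hsumsq : ∑ k, ν k ^ 2 = (n : ℝ) ^ 2 / 4 := by
    rw [sum_sq_transfer hM.eigenvalues ν hνperm, sum_eig_sq M hM]
    exact trace_sq_M A hA hA01
  have hstep3 : (i : ℝ) * x' ^ 2 + ((j : ℝ) + 1) * y' ^ 2 ≤ (n : ℝ) ^ 2 / 4 := by
    set T : Finset (Fin n) := Finset.Iio mi with hT
    set Bo : Finset (Fin n) := Finset.Ici mj with hBo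
    have hTcard : T.card = i := by rw [hT, Fin.card_Iio]
    have hBocard : Bo.card = j + 1 := by
      rw [hBo, Fin.card_Ici]
      omega
    have hdisj : Disjoint T Bo := by
      rw [Finset.disjoint_left]
      intro k hkT hkB
      rw [hT, Finset.mem_Iio] at hkT
      rw [hBo, Finset.mem_Ici] at hkB
      have h1 : k.val < i := hkT
      have h2 : n - j - 1 ≤ k.val := hkB
      omega
    have hTbound : ∀ k ∈ T, x' ^ 2 ≤ ν k ^ 2 := by
      intro k hk
      rw [hT, Finset.mem_Iio] at hk
      have hkle : k ≤ (⟨i - 1, hi1⟩ : Fin n) := by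
        have h1 : k.val < i := hk
        rw [Fin.le_def]
        show k.val ≤ i - 1
        omega
      have hνk : x ≤ ν k := hνmono hkle
      rcases le_or_gt 0 x with h0 | h0
      · have : x' = x := max_eq_left h0
        nlinarith
      · have : x' = 0 := max_eq_right h0.le
        nlinarith [sq_nonneg (ν k)]
    have hBobound : ∀ k ∈ Bo, y' ^ 2 ≤ ν k ^ 2 := by
      intro k hk
      rw [hBo, Finset.mem_Ici] at hk
      have hνk : ν k ≤ y := hνmono hk
      rcases le_or_gt y 0 with h0 | h0
      · have : y' = y := min_eq_left h0
        nlinarith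
      · have : y' = 0 := min_eq_right h0.le
        nlinarith [sq_nonneg (ν k)]
    have hTsum : (i : ℝ) * x' ^ 2 ≤ ∑ k ∈ T, ν k ^ 2 := by
      have := Finset.card_nsmul_le_sum T (fun k => ν k ^ 2) (x' ^ 2) hTbound
      rw [hTcard] at this
      simpa [nsmul_eq_mul] using this
    have hBosum : ((j : ℝ) + 1) * y' ^ 2 ≤ ∑ k ∈ Bo, ν k ^ 2 := by
      have := Finset.card_nsmul_le_sum Bo (fun k => ν k ^ 2) (y' ^ 2) hBobound
      rw [hBocard] at this
      rw [nsmul_eq_mul] at this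
      push_cast at this
      linarith
    have hsub : ∑ k ∈ T, ν k ^ 2 + ∑ k ∈ Bo, ν k ^ 2 ≤ ∑ k, ν k ^ 2 := by
      rw [← Finset.sum_union hdisj]
      exact Finset.sum_le_sum_of_subset_of_nonneg (Finset.subset_univ _)
        (fun k _ _ => sq_nonneg (ν k))
    linarith [hsumsq ▸ hsub]
  -- Step 4 : conclusion
  have hIpos : (0 : ℝ) < (i : ℝ) := by exact_mod_cast hi
  have hJpos : (0 : ℝ) < (j : ℝ) + 1 := by positivity
  have hfinal : x' - y' ≤ ((n : ℝ) / 2) * Real.sqrt (((i : ℝ) + j + 1) / ((i : ℝ) * ((j : ℝ) + 1))) := by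
    have hsq : (x' - y') ^ 2 ≤ ((n : ℝ) ^ 2 / 4) * (((i : ℝ) + j + 1) / ((i : ℝ) * ((j : ℝ) + 1))) := by
      rw [← mul_div_assoc, le_div_iff₀ (by positivity)]
      nlinarith [sq_nonneg ((i : ℝ) * x' + ((j : ℝ) + 1) * y'),
        mul_le_mul_of_nonneg_left hstep3 (show (0:ℝ) ≤ (i : ℝ) + (j : ℝ) + 1 by positivity)]
    have h1 : x' - y' = Real.sqrt ((x' - y') ^ 2) := by
      rw [Real.sqrt_sq (by linarith)]
    rw [h1]
    have h2 : ((n : ℝ) / 2) * Real.sqrt (((i : ℝ) + j + 1) / ((i : ℝ) * ((j : ℝ) + 1)))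
        = Real.sqrt (((n : ℝ) ^ 2 / 4) * (((i : ℝ) + j + 1) / ((i : ℝ) * ((j : ℝ) + 1)))) := by
      rw [Real.sqrt_mul (by positivity)]
      congr 1
      rw [show (n : ℝ) ^ 2 / 4 = ((n : ℝ) / 2) ^ 2 by ring, Real.sqrt_sq (by positivity)]
    rw [h2]
    exact Real.sqrt_le_sqrt hsq
  have hxx : μ mi ≤ x' := step1.trans (le_max_left x 0)
  have hyy : y' ≤ μ mj := (min_le_left y 0).trans step2
  calc μ ⟨i, by omega⟩ - μ ⟨n - j - 1, by omega⟩ = μ mi - μ mj := rfl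
    _ ≤ x' - y' := by linarith
    _ ≤ _ := hfinal
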